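/- Let X be an n×p real matrix, let W be an n×n diagonal real matrix with diagonal vector w = W·1_n satisfying 1_nᵀ·w = 1, and define the weighted column-mean vector x̄_w = Xᵀ·w and the ordinary column-mean vector x̄ = n⁻¹·Xᵀ·1_n. Let X_c = (I_n − n⁻¹·1_n·1_nᵀ)·X and X_wc = (I_n − 1_n·wᵀ)·X. Then X_cᵀ·W·X_c − X_wcᵀ·W·X_wc = Xᵀ·(w − n⁻¹·1_n)·(w − n⁻¹·1_n)ᵀ·X = (x̄_w − x̄)·(x̄_w − x̄)ᵀ, which is positive semidefinite; it is zero if x̄_w = x̄. -/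

import Mathlib

open Matrix

lemma vecMulVec_self_posSemidef {p : ℕ} (v : Fin p → ℝ) :
    (vecMulVec v v).PosSemidef := by
  rw [Matrix.posSemidef_iff_dotProduct_mulVec]
  constructor
  · ext i j
    simp [vecMulVec_apply, mul_comm]
  · intro x
    have : (star x) ⬝ᵥ (vecMulVec v v *ᵥ x) = (v ⬝ᵥ x) * (v ⬝ᵥ x) := by
      simp only [dotProduct, mulVec, vecMulVec_apply, star_trivial]
      rw [Finset.sum_mul]
      apply Finset.sum_congr rfl
      intro i _
      simp only [Finset.mul_sum, Finset.sum_mul, Finset.mul_sum]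
      apply Finset.sum_congr rfl
      intro j _
      ring
    rw [this]
    exact mul_self_nonneg _

/-- With `W` diagonal, weights summing to one, `X_c` the ordinarily centered
and `X_wc` the weighted-mean centered design matrix,
`X_cᵀWX_c − X_wcᵀWX_wc = Xᵀ(w − n⁻¹1_n)(w − n⁻¹1_n)ᵀX = (x̄_w − x̄)(x̄_w − x̄)ᵀ ⪰ 0`,
with equality to zero if `x̄_w = x̄`. -/
theorem weighted_centering_W_quadratic (n p : ℕ) (hn : 1 ≤ n)
    (X : Matrix (Fin n) (Fin p) ℝ)
    (W : Matrix (Fin n) (Fin n) ℝ)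
    (hWdiag : ∀ i j, i ≠ j → W i j = 0)
    (w : Fin n → ℝ) (hw : w = W *ᵥ (1 : Fin n → ℝ))
    (hwsum : (1 : Fin n → ℝ) ⬝ᵥ w = 1)
    (xbar : Fin p → ℝ) (hxbar : xbar = (n : ℝ)⁻¹ • (Xᵀ *ᵥ (1 : Fin n → ℝ)))
    (xbarw : Fin p → ℝ) (hxbarw : xbarw = Xᵀ *ᵥ w)
    (Xc : Matrix (Fin n) (Fin p) ℝ)
    (hXc : Xc = (1 - (n : ℝ)⁻¹ • vecMulVec (1 : Fin n → ℝ) (1 : Fin n → ℝ)) * X)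
    (Xwc : Matrix (Fin n) (Fin p) ℝ)
    (hXwc : Xwc = (1 - vecMulVec (1 : Fin n → ℝ) w) * X) :
    Xcᵀ * W * Xc - Xwcᵀ * W * Xwc =
      Xᵀ * vecMulVec (w - (n : ℝ)⁻¹ • (1 : Fin n → ℝ)) (w - (n : ℝ)⁻¹ • (1 : Fin n → ℝ)) *
        X ∧
    Xcᵀ * W * Xc - Xwcᵀ * W * Xwc = vecMulVec (xbarw - xbar) (xbarw - xbar) ∧
    (Xcᵀ * W * Xc - Xwcᵀ * W * Xwc).PosSemidef ∧
    (xbarw = xbar → Xcᵀ * W * Xc - Xwcᵀ * W * Xwc = 0) := by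
  -- basic scalar facts
  have hWd : ∀ i, W i i = w i := by
    intro i
    rw [hw]
    simp only [mulVec, dotProduct, Pi.one_apply, mul_one]
    exact (Finset.sum_eq_single i (fun j _ hj => hWdiag i j (Ne.symm hj))
      (fun h => absurd (Finset.mem_univ i) h)).symm
  have hsum : (∑ i, w i) = 1 := by
    simpa [dotProduct] using hwsum
  have hxbar' : ∀ a, xbar a = (n : ℝ)⁻¹ * ∑ i, X i a := by
    intro a; rw [hxbar]; simp [mulVec, dotProduct, transpose_apply]
  have hxbarw' : ∀ a, xbarw a = ∑ i, X i a * w i := by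
    intro a; rw [hxbarw]; simp [mulVec, dotProduct, transpose_apply]
  -- entrywise formulas for the centered matrices
  have hXc' : ∀ i a, Xc i a = X i a - xbar a := by
    intro i a
    rw [hXc]
    simp only [Matrix.mul_apply, Matrix.sub_apply, Matrix.smul_apply, vecMulVec_apply,
      Pi.one_apply, mul_one, one_mul, smul_eq_mul, sub_mul, Finset.sum_sub_distrib]
    rw [hxbar' a, Finset.mul_sum]
    congr 1
    rw [Finset.sum_eq_single i (fun j _ hj => by simp [Matrix.one_apply_ne' hj]) (by simp)]
    simp
  have hXwc' : ∀ i a, Xwc i a = X i a - xbarw a := by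
    intro i a
    rw [hXwc]
    simp only [Matrix.mul_apply, Matrix.sub_apply, vecMulVec_apply,
      Pi.one_apply, one_mul, sub_mul, Finset.sum_sub_distrib]
    rw [hxbarw' a]
    congr 1
    · rw [Finset.sum_eq_single i (fun j _ hj => by simp [Matrix.one_apply_ne' hj]) (by simp)]
      simp
    · exact Finset.sum_congr rfl fun j _ => mul_comm _ _
  -- quadratic form with a diagonal W
  have hquad : ∀ (Y : Matrix (Fin n) (Fin p) ℝ) (a b : Fin p),
      (Yᵀ * W * Y) a b = ∑ i, w i * (Y i a * Y i b) := by
    intro Y a b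
    simp only [Matrix.mul_apply, transpose_apply, Finset.sum_mul]
    rw [Finset.sum_comm]
    apply Finset.sum_congr rfl
    intro i _
    rw [Finset.sum_eq_single i (fun j _ hj => by rw [hWdiag i j (Ne.symm hj)]; ring) (by simp)]
    rw [hWd]; ring
  -- expansion of weighted sums of products of centered entries
  have hexp : ∀ (a b : Fin p) (u v : ℝ),
      (∑ i, w i * ((X i a - u) * (X i b - v))) =
        (∑ i, w i * (X i a * X i b)) - u * xbarw b - v * xbarw a + u * v := by
    intro a b u v
    have h1 : (∑ i, w i * ((X i a - u) * (X i b - v))) =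
        (∑ i, (w i * (X i a * X i b) - (X i b * w i) * u - (X i a * w i) * v
          + (u * v) * w i)) := by
      apply Finset.sum_congr rfl
      intro i _
      ring
    rw [h1]
    simp only [Finset.sum_add_distrib, Finset.sum_sub_distrib, ← Finset.sum_mul,
      ← Finset.mul_sum]
    rw [hsum, hxbarw' a, hxbarw' b]
    ring
  -- the key identity
  have key : Xcᵀ * W * Xc - Xwcᵀ * W * Xwc = vecMulVec (xbarw - xbar) (xbarw - xbar) := by
    ext a b
    simp only [Matrix.sub_apply, vecMulVec_apply, Pi.sub_apply]
    rw [hquad Xc a b, hquad Xwc a b]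
    have e1 : (∑ i, w i * (Xc i a * Xc i b)) =
        (∑ i, w i * (X i a * X i b)) - xbar a * xbarw b - xbar b * xbarw a
          + xbar a * xbar b := by
      rw [← hexp a b (xbar a) (xbar b)]
      exact Finset.sum_congr rfl fun i _ => by rw [hXc' i a, hXc' i b]
    have e2 : (∑ i, w i * (Xwc i a * Xwc i b)) =
        (∑ i, w i * (X i a * X i b)) - xbarw a * xbarw b - xbarw b * xbarw a
          + xbarw a * xbarw b := by
      rw [← hexp a b (xbarw a) (xbarw b)]
      exact Finset.sum_congr rfl fun i _ => by rw [hXwc' i a, hXwc' i b]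
    rw [e1, e2]
    ring
  -- the first conjunct
  have hd : ∀ a, (∑ i, X i a * (w i - (n : ℝ)⁻¹)) = xbarw a - xbar a := by
    intro a
    simp only [mul_sub, Finset.sum_sub_distrib]
    congr 1
    · rw [hxbarw' a]
    · rw [hxbar' a, Finset.mul_sum]
      exact Finset.sum_congr rfl fun i _ => mul_comm _ _
  have first : Xᵀ * vecMulVec (w - (n : ℝ)⁻¹ • (1 : Fin n → ℝ))
        (w - (n : ℝ)⁻¹ • (1 : Fin n → ℝ)) * X =
      vecMulVec (xbarw - xbar) (xbarw - xbar) := by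
    ext a b
    simp only [Matrix.mul_apply, transpose_apply, vecMulVec_apply, Pi.sub_apply,
      Pi.smul_apply, Pi.one_apply, smul_eq_mul, mul_one]
    have step : ∀ j, (∑ i, X i a * ((w i - (n : ℝ)⁻¹) * (w j - (n : ℝ)⁻¹))) * X j b
        = (xbarw a - xbar a) * (X j b * (w j - (n : ℝ)⁻¹)) := by
      intro j
      have h2 : (∑ i, X i a * ((w i - (n : ℝ)⁻¹) * (w j - (n : ℝ)⁻¹)))
          = (∑ i, X i a * (w i - (n : ℝ)⁻¹)) * (w j - (n : ℝ)⁻¹) := by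
        rw [Finset.sum_mul]
        exact Finset.sum_congr rfl fun i _ => by ring
      rw [h2, hd a]; ring
    rw [Finset.sum_congr rfl fun j _ => step j, ← Finset.mul_sum, hd b]
  refine ⟨by rw [key, first], key, ?_, ?_⟩
  · rw [key]; exact vecMulVec_self_posSemidef _
  · intro h
    rw [key, h, sub_self]
    ext a b
    simp [vecMulVec_apply]
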